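/- Let X_a, X_b be linear subspaces of ℝⁿ with X_a ∩ X_b = {0}, and let π^a, π^b denote the orthogonal projections onto the orthogonal complements X_a^⊥, X_b^⊥. Let μ > 0, δ > 0, let ψ : X_a^⊥ → ℂ be a Schwartz function, and let V : X_b^⊥ → ℂ be a function satisfying |V(w)| ≤ δ(1+‖w‖)^{−μ} for all w ∈ X_b^⊥. Then there exists a constant C > 0, depending only on X_a, X_b, μ and ψ (but not on V or δ), such that for all x ∈ ℝⁿ: |V(π^b x)| · |ψ(π^a x)| ≤ C δ (1+‖x‖)^{−μ}. -/

import Mathlib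

open Submodule

private lemma pbsd_key (M A B X : ℝ) (hM : 1 ≤ M) (hA : 0 ≤ A) (hB : 0 ≤ B)
    (hX : X ≤ M * (A + B)) : 1 + X ≤ M * ((1 + A) * (1 + B)) := by
  have hMAB : 0 ≤ M * (A * B) :=
    mul_nonneg (zero_le_one.trans hM) (mul_nonneg hA hB)
  have hexp : M * ((1 + A) * (1 + B)) = M + M * (A + B) + M * (A * B) := by ring
  linarith

set_option maxHeartbeats 1000000 in
/-- If `X_a ∩ X_b = {0}`, a pulled-back decaying potential times a pulled-back
Schwartz bound state decays at rate `μ` on all of `ℝⁿ`, with a constant independent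
of the potential `V` and of `δ`. -/
theorem potential_times_bound_state_decay (n : ℕ)
    (Xa Xb : Submodule ℝ (EuclideanSpace ℝ (Fin n))) (hXab : Xa ⊓ Xb = ⊥)
    (μ : ℝ) (hμ : 0 < μ)
    (ψ : SchwartzMap Xaᗮ ℂ) :
    ∃ C : ℝ, 0 < C ∧ ∀ (δ : ℝ) (V : Xbᗮ → ℂ), 0 < δ →
      (∀ w : Xbᗮ, ‖V w‖ ≤ δ * (1 + ‖w‖) ^ (-μ)) →
      ∀ x : EuclideanSpace ℝ (Fin n),
        ‖V (orthogonalProjection Xbᗮ x)‖ * ‖ψ (orthogonalProjection Xaᗮ x)‖ ≤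
          C * δ * (1 + ‖x‖) ^ (-μ) := by
  classical
  -- the combined projection map is injective
  set T : EuclideanSpace ℝ (Fin n) →L[ℝ] Xaᗮ × Xbᗮ :=
    (orthogonalProjection Xaᗮ).prod (orthogonalProjection Xbᗮ) with hT
  have hker : LinearMap.ker T.toLinearMap = ⊥ := by
    rw [eq_bot_iff]
    intro x hx
    simp only [LinearMap.mem_ker, ContinuousLinearMap.coe_coe] at hx
    have hx1 : (orthogonalProjection Xaᗮ x : Xaᗮ) = 0 := congrArg Prod.fst hx
    have hx2 : (orthogonalProjection Xbᗮ x : Xbᗮ) = 0 := congrArg Prod.snd hx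
    rw [orthogonalProjection_eq_zero_iff, Submodule.orthogonal_orthogonal] at hx1 hx2
    rw [← hXab]
    exact ⟨hx1, hx2⟩
  have hinj : Function.Injective T := LinearMap.ker_eq_bot.mp hker
  obtain ⟨K, hK, hKanti⟩ := (T.toLinearMap.injective_iff_antilipschitz).mp hinj
  set M : ℝ := max 1 (K : ℝ) with hM
  have hM1 : (1 : ℝ) ≤ M := le_max_left _ _
  have hMK : (K : ℝ) ≤ M := le_max_right _ _
  have hMpos : (0 : ℝ) < M := lt_of_lt_of_le one_pos hM1
  -- Schwartz decay bound at rate μ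
  set k : ℕ := ⌈μ⌉₊ with hk
  set B : ℝ := 2 ^ k * (Finset.Iic (k, 0)).sup (fun m => SchwartzMap.seminorm ℝ m.1 m.2) ψ + 1
    with hB
  have hBpos : 0 < B := by positivity
  have hψ : ∀ y : Xaᗮ, ‖ψ y‖ ≤ B * (1 + ‖y‖) ^ (-μ) := by
    intro y
    have h1 : (1 + ‖y‖) ^ k * ‖ψ y‖ ≤ B := by
      have := SchwartzMap.one_add_le_sup_seminorm_apply (𝕜 := ℝ) (m := (k, 0))
        (le_refl k) (le_refl 0) ψ y
      rw [norm_iteratedFDeriv_zero] at this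
      calc (1 + ‖y‖) ^ k * ‖ψ y‖ ≤
          2 ^ k * (Finset.Iic (k, 0)).sup (fun m => SchwartzMap.seminorm ℝ m.1 m.2) ψ := this
        _ ≤ B := by rw [hB]; linarith
    have hy1 : (1 : ℝ) ≤ 1 + ‖y‖ := by linarith [norm_nonneg (y : Xaᗮ)]
    have hy0 : (0 : ℝ) < 1 + ‖y‖ := by positivity
    have h2 : ‖ψ y‖ ≤ B * (1 + ‖y‖) ^ (-(k : ℝ)) := by
      rw [Real.rpow_neg hy0.le, Real.rpow_natCast, mul_comm B, ← div_eq_inv_mul,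
        le_div_iff₀ (by positivity), mul_comm]
      exact h1
    refine h2.trans (mul_le_mul_of_nonneg_left ?_ hBpos.le)
    exact Real.rpow_le_rpow_of_exponent_le hy1 (neg_le_neg (Nat.le_ceil μ))
  refine ⟨B * M ^ μ, by positivity, fun δ V hδ hV x => ?_⟩
  set a : Xaᗮ := orthogonalProjection Xaᗮ x
  set b : Xbᗮ := orthogonalProjection Xbᗮ x
  -- key geometric inequality
  have hgeom : 1 + ‖x‖ ≤ M * ((1 + ‖a‖) * (1 + ‖b‖)) := by
    have hx : ‖x‖ ≤ K * ‖T x‖ := by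
      have := hKanti.le_mul_dist x 0
      simpa [dist_eq_norm] using this
    have hTx : ‖T x‖ ≤ ‖a‖ + ‖b‖ := by
      have hTxe : T x = (a, b) := by
        simp [hT, ContinuousLinearMap.prod_apply]
        exact ⟨rfl, rfl⟩
      rw [hTxe, Prod.norm_def]
      exact max_le (le_add_of_nonneg_right (norm_nonneg _))
        (le_add_of_nonneg_left (norm_nonneg _))
    have hxab : ‖x‖ ≤ M * (‖a‖ + ‖b‖) := by
      calc ‖x‖ ≤ K * ‖T x‖ := hx
        _ ≤ M * (‖a‖ + ‖b‖) := by
            apply mul_le_mul hMK hTx (norm_nonneg _) hMpos.le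
    exact pbsd_key M _ _ _ hM1 (norm_nonneg _) (norm_nonneg _) hxab
  have h0a : (0 : ℝ) < 1 + ‖a‖ := by positivity
  have h0b : (0 : ℝ) < 1 + ‖b‖ := by positivity
  have h0x : (0 : ℝ) < 1 + ‖x‖ := by positivity
  have hpow : ((1 + ‖a‖) * (1 + ‖b‖)) ^ (-μ) ≤ M ^ μ * (1 + ‖x‖) ^ (-μ) := by
    have h1 : ((1 + ‖x‖) / M) ^ (-μ) = M ^ μ * (1 + ‖x‖) ^ (-μ) := by
      rw [Real.div_rpow h0x.le hMpos.le, Real.rpow_neg hMpos.le, division_def, inv_inv, mul_comm]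
    rw [← h1]
    apply Real.rpow_le_rpow_of_nonpos (by positivity) _ (neg_nonpos.mpr hμ.le)
    rw [div_le_iff₀ hMpos]
    calc (1 + ‖x‖) ≤ M * ((1 + ‖a‖) * (1 + ‖b‖)) := hgeom
      _ = (1 + ‖a‖) * (1 + ‖b‖) * M := by ring
  calc ‖V b‖ * ‖ψ a‖ ≤ (δ * (1 + ‖b‖) ^ (-μ)) * (B * (1 + ‖a‖) ^ (-μ)) :=
        mul_le_mul (hV b) (hψ a) (norm_nonneg _) (by positivity)
    _ = B * δ * ((1 + ‖a‖) * (1 + ‖b‖)) ^ (-μ) := by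
        rw [Real.mul_rpow h0a.le h0b.le]; ring
    _ ≤ B * δ * (M ^ μ * (1 + ‖x‖) ^ (-μ)) := by
        apply mul_le_mul_of_nonneg_left hpow (by positivity)
    _ = B * M ^ μ * δ * (1 + ‖x‖) ^ (-μ) := by ring
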